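/- Let a, b, c ∈ ℝ with a > 0, and let f : ℝ → ℂ be twice continuously differentiable. Suppose a f''(z) + i b f'(z) + c f(z) = 0 for all z ≥ 0, f(0) = 0, and f(z) → 0 as z → +∞. Then f(z) = 0 for all z ≥ 0. -/

import Mathlib

open Filter Set

private lemma constOn {g : ℝ → ℝ} (hg : ∀ z, 0 ≤ z → HasDerivAt g 0 z)
    {z : ℝ} (hz : 0 ≤ z) : g z = g 0 := by
  have h := constant_of_has_deriv_right_zero (f := g) (a := 0) (b := z)
    (fun x hx => (hg x hx.1).continuousAt.continuousWithinAt)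
    (fun x hx => (hg x hx.1).hasDerivWithinAt)
  exact h z ⟨hz, le_refl z⟩

private lemma monoOn {g g' : ℝ → ℝ} {Z : ℝ}
    (hg : ∀ z, Z ≤ z → HasDerivAt g (g' z) z)
    (hg' : ∀ z, Z ≤ z → 0 ≤ g' z) :
    ∀ x y, Z ≤ x → x ≤ y → g x ≤ g y := by
  intro x y hx hxy
  have hm : MonotoneOn g (Set.Ici Z) := by
    apply monotoneOn_of_deriv_nonneg (convex_Ici Z)
      (fun t ht => (hg t ht).continuousAt.continuousWithinAt)
    · intro t ht
      have htZ : Z < t := by simpa [interior_Ici] using ht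
      exact ((hg t htZ.le).differentiableAt).differentiableWithinAt
    · intro t ht
      have htZ : Z < t := by simpa [interior_Ici] using ht
      rw [(hg t htZ.le).deriv]
      exact hg' t htZ.le
  exact hm hx (hx.trans hxy) hxy

private lemma core (a b c : ℝ) (ha : 0 < a) (p q p' q' p'' q'' : ℝ → ℝ)
    (hp : ∀ z, HasDerivAt p (p' z) z) (hq : ∀ z, HasDerivAt q (q' z) z)
    (hp' : ∀ z, HasDerivAt p' (p'' z) z) (hq' : ∀ z, HasDerivAt q' (q'' z) z)
    (e1 : ∀ z, 0 ≤ z → a * p'' z - b * q' z + c * p z = 0)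
    (e2 : ∀ z, 0 ≤ z → a * q'' z + b * p' z + c * q z = 0)
    (h0p : p 0 = 0) (h0q : q 0 = 0)
    (hlim : Tendsto (fun z => p z ^ 2 + q z ^ 2) atTop (nhds 0)) :
    ∀ z, 0 ≤ z → p z ^ 2 + q z ^ 2 = 0 := by
  set h : ℝ → ℝ := fun z => p z ^ 2 + q z ^ 2 with hdef
  set v : ℝ → ℝ := fun z => p z * p' z + q z * q' z with vdef
  set w : ℝ → ℝ := fun z => p z * q' z - q z * p' z with wdef
  set n : ℝ → ℝ := fun z => p' z ^ 2 + q' z ^ 2 with ndef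
  have hpos : ∀ z, 0 ≤ h z := fun z => by simp only [hdef]; positivity
  have hh0 : h 0 = 0 := by simp [hdef, h0p, h0q]
  have hv0 : v 0 = 0 := by simp [vdef, h0p, h0q]
  have hw0 : w 0 = 0 := by simp [wdef, h0p, h0q]
  have Hh : ∀ z, HasDerivAt h (2 * v z) z := by
    intro z
    have := ((hp z).pow 2).add ((hq z).pow 2)
    convert! this using 1
    simp only [vdef]; ring
  have Hn : ∀ z, HasDerivAt n (2 * (p' z * p'' z + q' z * q'' z)) z := by
    intro z
    have := ((hp' z).pow 2).add ((hq' z).pow 2)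
    convert! this using 1; ring
  have Hv : ∀ z, HasDerivAt v (n z + (p z * p'' z + q z * q'' z)) z := by
    intro z
    have := ((hp z).mul (hp' z)).add ((hq z).mul (hq' z))
    convert! this using 1
    simp only [ndef]; ring
  have Hw : ∀ z, HasDerivAt w (p z * q'' z - q z * p'' z) z := by
    intro z
    have := ((hp z).mul (hq' z)).sub ((hq z).mul (hp' z))
    convert! this using 1; ring
  have Han : ∀ z, 0 ≤ z → HasDerivAt (fun t => a * n t) (-(2 * c * v z)) z := by
    intro z hz
    have := (Hn z).const_mul a
    convert! this using 1
    simp only [vdef]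
    linear_combination (-2 * p' z) * e1 z hz + (-2 * q' z) * e2 z hz
  have Haw : ∀ z, 0 ≤ z → HasDerivAt (fun t => a * w t) (-(b * v z)) z := by
    intro z hz
    have := (Hw z).const_mul a
    convert! this using 1
    simp only [vdef]
    linear_combination (-(p z)) * e2 z hz + (q z) * e1 z hz
  have Hav : ∀ z, 0 ≤ z → HasDerivAt (fun t => a * v t)
      (a * n z + b * w z - c * h z) z := by
    intro z hz
    have := (Hv z).const_mul a
    convert! this using 1
    simp only [hdef, wdef, ndef]
    linear_combination (-(p z)) * e1 z hz + (-(q z)) * e2 z hz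
  -- invariants
  have hK : ∀ z, 0 ≤ z → a * n z + c * h z = a * n 0 := by
    intro z hz
    have hc : ∀ t, 0 ≤ t → HasDerivAt (fun s => a * n s + c * h s) 0 t := by
      intro t ht
      have := (Han t ht).add ((Hh t).const_mul c)
      convert! this using 1; ring
    have := constOn hc hz
    rw [hh0] at this
    linarith
  have hW : ∀ z, 0 ≤ z → 2 * (a * w z) + b * h z = 0 := by
    intro z hz
    have hc : ∀ t, 0 ≤ t → HasDerivAt (fun s => 2 * (a * w s) + b * h s) 0 t := by
      intro t ht
      have := ((Haw t ht).const_mul 2).add ((Hh t).const_mul b)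
      convert! this using 1; ring
    have := constOn hc hz
    rw [hh0, hw0] at this
    linarith
  set K : ℝ := a * n 0 with Kdef
  set D : ℝ := 4 * a * c + b ^ 2 with Ddef
  have hK0 : 0 ≤ K := by
    have hn0 : 0 ≤ n 0 := by simp only [ndef]; positivity
    exact mul_nonneg ha.le hn0
  set V : ℝ → ℝ := fun z => 2 * a * (a * v z) with Vdef
  have hV0 : V 0 = 0 := by simp [Vdef, hv0]
  have HV : ∀ z, 0 ≤ z → HasDerivAt V (2 * a * K - D * h z) z := by
    intro z hz
    have := (Hav z hz).const_mul (2 * a)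
    convert! this using 1
    simp only [Kdef, Ddef]
    linear_combination (-(2 * a)) * hK z hz + (-b) * hW z hz
  -- energy identity
  have hE : ∀ z, 0 ≤ z → V z ^ 2 = 4 * a ^ 3 * K * h z - a ^ 2 * D * h z ^ 2 := by
    intro z hz
    have hc : ∀ t, 0 ≤ t → HasDerivAt
        (fun s => V s ^ 2 - 4 * a ^ 3 * K * h s + a ^ 2 * D * h s ^ 2) 0 t := by
      intro t ht
      have := (((HV t ht).pow 2).sub ((Hh t).const_mul (4 * a ^ 3 * K))).add
        (((Hh t).pow 2).const_mul (a ^ 2 * D))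
      convert! this using 1
      simp only [Vdef]
      ring
    have h0 := constOn hc hz
    rw [hV0, hh0] at h0
    nlinarith [h0]
  -- limits
  have hlimh : Tendsto h atTop (nhds 0) := hlim
  have hlimV : Tendsto V atTop (nhds 0) := by
    have h2 : Tendsto (fun z => V z ^ 2) atTop (nhds 0) := by
      have hr : Tendsto (fun z => 4 * a ^ 3 * K * h z - a ^ 2 * D * h z ^ 2)
          atTop (nhds 0) := by
        have := (hlimh.const_mul (4 * a ^ 3 * K)).sub ((hlimh.pow 2).const_mul (a ^ 2 * D))
        simpa using this
      refine hr.congr' ?_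
      filter_upwards [eventually_ge_atTop (0:ℝ)] with z hz
      exact (hE z hz).symm
    have habs : Tendsto (fun z => |V z|) atTop (nhds 0) := by
      have h3 := (Real.continuous_sqrt.tendsto 0).comp h2
      simp only [Function.comp_def, Real.sqrt_zero] at h3
      refine h3.congr fun z => ?_
      exact Real.sqrt_sq_eq_abs _
    have hneg : Tendsto (fun z => -|V z|) atTop (nhds 0) := by
      simpa using habs.neg
    exact tendsto_of_tendsto_of_tendsto_of_le_of_le hneg habs
      (fun z => neg_abs_le _) (fun z => le_abs_self _)
  -- main case analysis
  have key : ∀ z, 0 ≤ z → h z = 0 := by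
    by_cases hD : D ≤ 0
    · -- convex case: h is nondecreasing on [0, ∞)
      have hVpos : ∀ z, 0 ≤ z → 0 ≤ V z := by
        intro z hz
        have h1 := monoOn HV
          (fun t ht => by nlinarith [hpos t, hK0]) 0 z le_rfl hz
        rw [hV0] at h1; exact h1
      have hvpos : ∀ z, 0 ≤ z → 0 ≤ 2 * v z := by
        intro z hz
        have := hVpos z hz
        simp only [Vdef] at this
        nlinarith [mul_pos ha ha]
      have hmono : ∀ x y, (0:ℝ) ≤ x → x ≤ y → h x ≤ h y :=
        monoOn (fun z _ => Hh z) hvpos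
      intro z hz
      have hle : h z ≤ 0 := by
        refine ge_of_tendsto hlimh ?_
        filter_upwards [eventually_ge_atTop z] with t ht
        exact hmono z t hz ht
      linarith [hpos z]
    · push_neg at hD
      have hKeq : K = 0 := by
        by_contra hKne
        have hKpos : 0 < K := lt_of_le_of_ne hK0 (Ne.symm hKne)
        have haK : (0:ℝ) < a * K := mul_pos ha hKpos
        have hev : ∀ᶠ z in atTop, D * h z < a * K := by
          have hDh : Tendsto (fun z => D * h z) atTop (nhds 0) := by
            simpa using hlimh.const_mul D
          exact hDh.eventually_lt_const haK
        obtain ⟨Z₀, hZ₀⟩ := eventually_atTop.mp hev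
        set Z : ℝ := max Z₀ 0 with Zd
        have hZnn : (0:ℝ) ≤ Z := le_max_right _ _
        have hφ : ∀ z, Z ≤ z → HasDerivAt (fun t => V t - a * K * t)
            (2 * a * K - D * h z - a * K) z := by
          intro z hz
          have := (HV z (hZnn.trans hz)).sub ((hasDerivAt_id z).const_mul (a * K))
          convert! this using 1; ring
        have hφ' : ∀ z, Z ≤ z → 0 ≤ 2 * a * K - D * h z - a * K := by
          intro z hz
          have := hZ₀ z ((le_max_left _ _).trans hz)
          linarith
        have hmonoφ := monoOn hφ hφ'
        have hVtop : Tendsto V atTop atTop := by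
          apply Filter.tendsto_atTop_mono' atTop
            (f₁ := fun t => a * K * t + (V Z - a * K * Z))
          · filter_upwards [eventually_ge_atTop Z] with t ht
            have := hmonoφ Z t le_rfl ht
            linarith
          · exact Filter.tendsto_atTop_add_const_right _ _
              (Filter.Tendsto.const_mul_atTop haK Filter.tendsto_id)
        exact not_tendsto_atTop_of_tendsto_nhds hlimV hVtop
      intro z hz
      have hEz := hE z hz
      rw [hKeq] at hEz
      have h2 : h z ^ 2 = 0 := by
        nlinarith [sq_nonneg (V z), sq_nonneg (h z), mul_pos (mul_pos ha ha) hD]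
      exact pow_eq_zero_iff two_ne_zero |>.mp h2
  intro z hz
  have := key z hz
  simpa [hdef] using this

/-- Lopatinskii condition verification (3D): the only solution of
`a f'' + i b f' + c f = 0` on `[0, ∞)` (with `a, b, c` real, `a > 0`) which vanishes at
`z = 0` and decays at `+∞` is the trivial one. -/
theorem lopatinskii_ode_3d (a b c : ℝ) (ha : 0 < a) (f : ℝ → ℂ) (hf : ContDiff ℝ 2 f)
    (heq : ∀ z : ℝ, 0 ≤ z →
      (a : ℂ) * deriv (deriv f) z + Complex.I * (b : ℂ) * deriv f z + (c : ℂ) * f z = 0)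
    (h0 : f 0 = 0) (hlim : Tendsto f atTop (nhds 0)) :
    ∀ z : ℝ, 0 ≤ z → f z = 0 := by
  have hd1 : Differentiable ℝ f := hf.differentiable two_ne_zero
  have hd2 : Differentiable ℝ (deriv f) := by
    have h11 : ContDiff ℝ ((1:WithTop ℕ∞) + 1) f := by norm_num; exact hf
    exact ((contDiff_succ_iff_deriv.mp h11).2.2).differentiable one_ne_zero
  have hp : ∀ z, HasDerivAt (fun t => (f t).re) ((deriv f z).re) z := fun z =>
    (Complex.reCLM.hasFDerivAt.comp_hasDerivAt z (hd1 z).hasDerivAt)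
  have hq : ∀ z, HasDerivAt (fun t => (f t).im) ((deriv f z).im) z := fun z =>
    (Complex.imCLM.hasFDerivAt.comp_hasDerivAt z (hd1 z).hasDerivAt)
  have hp' : ∀ z, HasDerivAt (fun t => (deriv f t).re) ((deriv (deriv f) z).re) z := fun z =>
    (Complex.reCLM.hasFDerivAt.comp_hasDerivAt z (hd2 z).hasDerivAt)
  have hq' : ∀ z, HasDerivAt (fun t => (deriv f t).im) ((deriv (deriv f) z).im) z := fun z =>
    (Complex.imCLM.hasFDerivAt.comp_hasDerivAt z (hd2 z).hasDerivAt)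
  have e1 : ∀ z, 0 ≤ z →
      a * (deriv (deriv f) z).re - b * (deriv f z).im + c * (f z).re = 0 := by
    intro z hz
    have h := congrArg Complex.re (heq z hz)
    simp [Complex.add_re, Complex.mul_re, Complex.mul_im] at h
    linarith
  have e2 : ∀ z, 0 ≤ z →
      a * (deriv (deriv f) z).im + b * (deriv f z).re + c * (f z).im = 0 := by
    intro z hz
    have h := congrArg Complex.im (heq z hz)
    simp [Complex.add_im, Complex.mul_re, Complex.mul_im] at h
    linarith
  have hlim2 : Tendsto (fun z => (f z).re ^ 2 + (f z).im ^ 2) atTop (nhds 0) := by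
    have h3 := (Complex.continuous_normSq.tendsto 0).comp hlim
    simp only [Function.comp_def, map_zero] at h3
    refine h3.congr fun z => ?_
    rw [Complex.normSq_apply]; ring
  intro z hz
  have hc := core a b c ha _ _ _ _ _ _ hp hq hp' hq' e1 e2
    (by simp [h0]) (by simp [h0]) hlim2 z hz
  have h1 : (f z).re = 0 := by nlinarith [sq_nonneg (f z).re, sq_nonneg (f z).im]
  have h2 : (f z).im = 0 := by nlinarith [sq_nonneg (f z).re, sq_nonneg (f z).im]
  exact Complex.ext h1 h2
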